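/- arXiv:1007.5434 — 3 statements merged into one kernel-verified Lean document; each statement's English description precedes it below -/
import Mathlib

section
/- The explicit quadruple (A;B;C;D), where A = (+,-,+,+,-,+,+,+,-,+,-,+,+,-,-,+,+,-,-,+,+,+,+,+,-,-,-,-,+,+,+,-,-,-,-,-,+), B = (+,+,+,-,-,-,+,-,-,-,-,-,+,+,-,-,+,+,-,-,+,-,+,-,-,+,-,+,+,-,+,+,-,+,-,+,-), C = (+,+,-,+,-,+,-,-,-,-,-,-,+,+,+,+,+,+,-,+,+,+,-,+,+,+,+,+,-,-,-,+,+,+,-,+), and D = (+,+,+,+,+,-,+,+,+,-,-,+,+,+,-,+,-,+,-,-,+,-,-,+,-,+,+,-,+,+,+,-,+,-,-,+) (with + denoting +1 and - denoting -1), is an element of NN(36): A and B have length 37, C and D have length 36, N_A(s)+N_B(s)+N_C(s)+N_D(s) = 0 for every s ≥ 1, and a_i = (-1)^(i-1) b_i for all 1 ≤ i ≤ 36. -/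
/-- Nonperiodic autocorrelation function of an integer sequence `a` of length `m`
(indexed from 1): `N_a(s) = Σ_{i=1}^{m-s} a_i a_{i+s}` (and `0` for `s ≥ m`). -/
def naf (m : ℕ) (a : ℕ → ℤ) (s : ℕ) : ℤ :=
  ∑ i ∈ Finset.range (m - s), a (i + 1) * a (i + 1 + s)

/-- `a` is a `{±1}`-sequence of length `m` (indexed from `1` to `m`). -/
def IsPM (m : ℕ) (a : ℕ → ℤ) : Prop :=
  ∀ i, 1 ≤ i → i ≤ m → a i = 1 ∨ a i = -1

/-- Base sequences `BS(m,n)`: `a, b` are `{±1}`-sequences of length `m`, `c, d` are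
`{±1}`-sequences of length `n`, and the sum of the nonperiodic autocorrelation
functions vanishes for every `s ≥ 1`. -/
def IsBS (m n : ℕ) (a b c d : ℕ → ℤ) : Prop :=
  IsPM m a ∧ IsPM m b ∧ IsPM n c ∧ IsPM n d ∧
    ∀ s, 1 ≤ s → naf m a s + naf m b s + naf n c s + naf n d s = 0

/-- Near-normal sequences `NN(n)`: base sequences in `BS(n+1,n)` with
`a_i = (-1)^(i-1) b_i` for `1 ≤ i ≤ n`. -/
def IsNN (n : ℕ) (a b c d : ℕ → ℤ) : Prop :=
  IsBS (n + 1) n a b c d ∧ ∀ i, 1 ≤ i → i ≤ n → a i = (-1) ^ (i - 1) * b i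

/-- The sequence `A` of Table 1 (`{±1}`-sequence of length 37, indexed from 1). -/
def seqA : ℕ → ℤ := fun i => (([1, -1, 1, 1, -1, 1, 1, 1, -1, 1, -1, 1, 1, -1, -1, 1, 1, -1, -1, 1, 1, 1, 1, 1, -1, -1, -1, -1, 1, 1, 1, -1, -1, -1, -1, -1, 1] : List ℤ)).getD (i - 1) 0

/-- The sequence `B` of Table 1 (`{±1}`-sequence of length 37, indexed from 1). -/
def seqB : ℕ → ℤ := fun i => (([1, 1, 1, -1, -1, -1, 1, -1, -1, -1, -1, -1, 1, 1, -1, -1, 1, 1, -1, -1, 1, -1, 1, -1, -1, 1, -1, 1, 1, -1, 1, 1, -1, 1, -1, 1, -1] : List ℤ)).getD (i - 1) 0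

/-- The sequence `C` of Table 1 (`{±1}`-sequence of length 36, indexed from 1). -/
def seqC : ℕ → ℤ := fun i => (([1, 1, -1, 1, -1, 1, -1, -1, -1, -1, -1, -1, 1, 1, 1, 1, 1, 1, -1, 1, 1, 1, -1, 1, 1, 1, 1, 1, -1, -1, -1, 1, 1, 1, -1, 1] : List ℤ)).getD (i - 1) 0

/-- The sequence `D` of Table 1 (`{±1}`-sequence of length 36, indexed from 1). -/
def seqD : ℕ → ℤ := fun i => (([1, 1, 1, 1, 1, -1, 1, 1, 1, -1, -1, 1, 1, 1, -1, 1, -1, 1, -1, -1, 1, -1, -1, 1, -1, 1, 1, -1, 1, 1, 1, -1, 1, -1, -1, 1] : List ℤ)).getD (i - 1) 0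

lemma naf_eq_zero (m : ℕ) (a : ℕ → ℤ) (s : ℕ) (h : m ≤ s) : naf m a s = 0 := by
  unfold naf
  rw [Nat.sub_eq_zero_of_le h]
  simp

lemma key : ∀ s < 37, 1 ≤ s →
    naf 37 seqA s + naf 37 seqB s + naf 36 seqC s + naf 36 seqD s = 0 := by decide

/-- The explicit quadruple `(A;B;C;D)` above is an element of `NN(36)`. -/
theorem explicit_NN36 : IsNN 36 seqA seqB seqC seqD := by
  refine ⟨⟨?_, ?_, ?_, ?_, ?_⟩, ?_⟩
  · show ∀ i, 1 ≤ i → i ≤ 37 → _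
    decide
  · show ∀ i, 1 ≤ i → i ≤ 37 → _
    decide
  · show ∀ i, 1 ≤ i → i ≤ 36 → _
    decide
  · show ∀ i, 1 ≤ i → i ≤ 36 → _
    decide
  · intro s hs
    by_cases h : s < 37
    · exact key s h hs
    · push_neg at h
      rw [naf_eq_zero 37 seqA s h, naf_eq_zero 37 seqB s h,
        naf_eq_zero 36 seqC s (by omega), naf_eq_zero 36 seqD s (by omega)]
      ring
  · decide
end

section
/- If T-sequences of length n exist, then there exists an orthogonal design OD(4n; n,n,n,n); that is, nonemptiness of TS(n) implies the existence of a 4n×4n matrix S with entries in {0, ±x_1, ±x_2, ±x_3, ±x_4} (the x_j being independent commuting indeterminates over ℤ) satisfying S Sᵀ = n(x_1² + x_2² + x_3² + x_4²) I_{4n}. -/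
/-- `a` is a `{0,±1}`-sequence of length `m` (indexed from `1` to `m`). -/
def IsTernary (m : ℕ) (a : ℕ → ℤ) : Prop :=
  ∀ i, 1 ≤ i → i ≤ m → a i = 0 ∨ a i = 1 ∨ a i = -1

/-- T-sequences `TS(n)`: four `{0,±1}`-sequences of length `n` such that for each
index exactly one of the four entries is nonzero, and the sum of the nonperiodic
autocorrelation functions vanishes for every `s ≥ 1`. -/
def IsTS (n : ℕ) (a b c d : ℕ → ℤ) : Prop :=
  IsTernary n a ∧ IsTernary n b ∧ IsTernary n c ∧ IsTernary n d ∧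
    (∀ i, 1 ≤ i → i ≤ n →
      (a i ≠ 0 ∧ b i = 0 ∧ c i = 0 ∧ d i = 0) ∨
      (a i = 0 ∧ b i ≠ 0 ∧ c i = 0 ∧ d i = 0) ∨
      (a i = 0 ∧ b i = 0 ∧ c i ≠ 0 ∧ d i = 0) ∨
      (a i = 0 ∧ b i = 0 ∧ c i = 0 ∧ d i ≠ 0)) ∧
    ∀ s, 1 ≤ s → naf n a s + naf n b s + naf n c s + naf n d s = 0

open MvPolynomial in
/-- An orthogonal design `OD(m; t,t,t,t)` in four variables: an `m × m` matrix with
entries in `{0, ±x₁, ±x₂, ±x₃, ±x₄}` (the `x_j` independent commuting indeterminates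
over `ℤ`) such that `S Sᵀ = t(x₁² + x₂² + x₃² + x₄²) I_m`. -/
def IsOD4 (m t : ℕ) (S : Matrix (Fin m) (Fin m) (MvPolynomial (Fin 4) ℤ)) : Prop :=
  (∀ i j, S i j = 0 ∨ ∃ k : Fin 4, S i j = X k ∨ S i j = -X k) ∧
    S * S.transpose = ((t : MvPolynomial (Fin 4) ℤ) * (X 0 ^ 2 + X 1 ^ 2 + X 2 ^ 2 + X 3 ^ 2)) • 1

namespace TSOD

open Matrix MvPolynomial

def tv (n : ℕ) (a : ℕ → ℤ) (m : ZMod n) : ℤ := a (m.val + 1)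

lemma sum_zmod {n : ℕ} [NeZero n] (f : ZMod n → ℤ) :
    ∑ m : ZMod n, f m = ∑ i ∈ Finset.range n, f i := by
  refine Finset.sum_nbij' (fun m => m.val) (fun i => (i : ZMod n)) ?_ ?_ ?_ ?_ ?_ <;>
    simp +contextual [ZMod.val_lt, ZMod.natCast_rightInverse.id,
      ZMod.val_natCast_of_lt, Finset.mem_range, Nat.mod_eq_of_lt]

lemma paf_single {n : ℕ} [NeZero n] (a : ℕ → ℤ) (s : ZMod n) (hs : s ≠ 0) :
    ∑ m : ZMod n, tv n a m * tv n a (m + s) = naf n a s.val + naf n a (n - s.val) := by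
  have hsv : s.val ≠ 0 := by
    simpa [ZMod.val_eq_zero] using hs
  have hslt : s.val < n := ZMod.val_lt s
  rw [sum_zmod]
  have hsplit : Finset.range n = Finset.Ico 0 (n - s.val) ∪ Finset.Ico (n - s.val) n := by
    rw [Finset.Ico_union_Ico_eq_Ico (by omega) (by omega), Finset.range_eq_Ico]
  rw [hsplit, Finset.sum_union (by
    simp [Finset.disjoint_left, Finset.mem_Ico]; omega)]
  have hterm : ∀ i : ℕ, i < n →
      tv n a i * tv n a (↑i + s) = a (i + 1) * a ((i + s.val) % n + 1) := by
    intro i hi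
    have h1 : ((i : ZMod n)).val = i := ZMod.val_natCast_of_lt hi
    have h2 : ((i : ZMod n) + s).val = (i + s.val) % n := by
      rw [ZMod.val_add, h1]
    simp [tv, h1, h2]
  have e1 : ∑ i ∈ Finset.Ico 0 (n - s.val), tv n a i * tv n a (↑i + s) = naf n a s.val := by
    rw [← Finset.range_eq_Ico, naf]
    refine Finset.sum_congr rfl fun i hi => ?_
    simp only [Finset.mem_range] at hi
    rw [hterm i (by omega), Nat.mod_eq_of_lt (by omega)]
    ring_nf
  have e2 : ∑ i ∈ Finset.Ico (n - s.val) n, tv n a i * tv n a (↑i + s)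
      = naf n a (n - s.val) := by
    rw [Finset.sum_Ico_eq_sum_range, naf]
    have hc : n - (n - s.val) = s.val := by omega
    rw [hc]
    refine Finset.sum_congr rfl fun j hj => ?_
    simp only [Finset.mem_range] at hj
    rw [hterm _ (by omega)]
    have hm : (n - s.val + j + s.val) % n = j := by
      have h : n - s.val + j + s.val = j + n := by omega
      rw [h, Nat.add_mod_right]
      exact Nat.mod_eq_of_lt (by omega)
    rw [hm]
    have harg : j + 1 + (n - s.val) = n - s.val + j + 1 := by omega
    rw [harg, mul_comm]
  rw [e1, e2]

lemma sq_one {x : ℤ} (h : x = 0 ∨ x = 1 ∨ x = -1) (hx : x ≠ 0) : x * x = 1 := by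
  rcases h with rfl|rfl|rfl
  · exact absurd rfl hx
  · norm_num
  · norm_num

lemma paf4 {n : ℕ} [NeZero n] {a b c d : ℕ → ℤ} (h : IsTS n a b c d) (s : ZMod n) :
    ∑ m : ZMod n, (tv n a m * tv n a (m+s) + tv n b m * tv n b (m+s)
      + tv n c m * tv n c (m+s) + tv n d m * tv n d (m+s)) = if s = 0 then (n:ℤ) else 0 := by
  obtain ⟨ha, hb, hc, hd, hone, hnaf⟩ := h
  by_cases hs : s = 0
  · subst hs
    simp only [add_zero, if_pos rfl]
    have key : ∀ m : ZMod n, tv n a m * tv n a m + tv n b m * tv n b m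
        + tv n c m * tv n c m + tv n d m * tv n d m = 1 := by
      intro m
      have h1 : 1 ≤ m.val + 1 := by omega
      have h2 : m.val + 1 ≤ n := by have := ZMod.val_lt m; omega
      simp only [tv]
      rcases hone _ h1 h2 with ⟨hx,h0,h0',h0''⟩|⟨h0,hx,h0',h0''⟩|⟨h0,h0',hx,h0''⟩|⟨h0,h0',h0'',hx⟩
      · rw [sq_one (ha _ h1 h2) hx, h0, h0', h0'']; ring
      · rw [sq_one (hb _ h1 h2) hx, h0, h0', h0'']; ring
      · rw [sq_one (hc _ h1 h2) hx, h0, h0', h0'']; ring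
      · rw [sq_one (hd _ h1 h2) hx, h0, h0', h0'']; ring
    rw [Finset.sum_congr rfl (fun m _ => key m)]
    simp [ZMod.card]
  · rw [Finset.sum_add_distrib, Finset.sum_add_distrib, Finset.sum_add_distrib,
      paf_single a s hs, paf_single b s hs, paf_single c s hs, paf_single d s hs, if_neg hs]
    have hsv : s.val ≠ 0 := by simpa [ZMod.val_eq_zero] using hs
    have hslt := ZMod.val_lt s
    have h1 := hnaf s.val (by omega)
    have h2 := hnaf (n - s.val) (by omega)
    linarith

abbrev R4 := MvPolynomial (Fin 4) ℤ

noncomputable section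
variable (n : ℕ) [NeZero n] (a b c d : ℕ → ℤ)

def va : ZMod n → R4 := fun m =>
  X 0 * C (tv n a m) + X 1 * C (tv n b m) + X 2 * C (tv n c m) + X 3 * C (tv n d m)
def vb : ZMod n → R4 := fun m =>
  (-X 1) * C (tv n a m) + X 0 * C (tv n b m) + X 3 * C (tv n c m) + (-X 2) * C (tv n d m)
def vc : ZMod n → R4 := fun m =>
  (-X 2) * C (tv n a m) + (-X 3) * C (tv n b m) + X 0 * C (tv n c m) + X 1 * C (tv n d m)
def vd : ZMod n → R4 := fun m =>
  (-X 3) * C (tv n a m) + X 2 * C (tv n b m) + (-X 1) * C (tv n c m) + X 0 * C (tv n d m)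

def cst : R4 := (n : R4) * (X 0^2 + X 1^2 + X 2^2 + X 3^2)

lemma quat (m m' : ZMod n) :
    va n a b c d m * va n a b c d m' + vb n a b c d m * vb n a b c d m'
      + vc n a b c d m * vc n a b c d m' + vd n a b c d m * vd n a b c d m'
    = (X 0^2 + X 1^2 + X 2^2 + X 3^2) *
        C (tv n a m * tv n a m' + tv n b m * tv n b m'
          + tv n c m * tv n c m' + tv n d m * tv n d m') := by
  simp only [va, vb, vc, vd, C_add, C_mul]
  ring

lemma hdiag {a b c d : ℕ → ℤ} (h : IsTS n a b c d) :
    circulant (va n a b c d) * (circulant (va n a b c d))ᵀ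
      + circulant (vb n a b c d) * (circulant (vb n a b c d))ᵀ
      + circulant (vc n a b c d) * (circulant (vc n a b c d))ᵀ
      + circulant (vd n a b c d) * (circulant (vd n a b c d))ᵀ
    = cst n • (1 : Matrix (ZMod n) (ZMod n) R4) := by
  ext i j
  simp only [Matrix.add_apply, Matrix.mul_apply, Matrix.transpose_apply, circulant_apply]
  rw [← Finset.sum_add_distrib, ← Finset.sum_add_distrib, ← Finset.sum_add_distrib]
  rw [Finset.sum_congr rfl (fun k _ => quat n a b c d (i - k) (j - k)), ← Finset.mul_sum,
    ← map_sum]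
  have reind : ∑ k : ZMod n, (tv n a (i-k) * tv n a (j-k) + tv n b (i-k) * tv n b (j-k)
      + tv n c (i-k) * tv n c (j-k) + tv n d (i-k) * tv n d (j-k))
      = ∑ m : ZMod n, (tv n a m * tv n a (m + (j-i)) + tv n b m * tv n b (m + (j-i))
      + tv n c m * tv n c (m + (j-i)) + tv n d m * tv n d (m + (j-i))) := by
    refine Fintype.sum_equiv (Equiv.subLeft i) _ _ fun k => ?_
    have h : i - k + (j - i) = j - k := by ring
    simp [Equiv.subLeft, h]
  rw [reind, paf4 h (j - i)]
  rw [Matrix.smul_apply, Matrix.one_apply, smul_eq_mul]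
  by_cases hij : i = j
  · subst hij
    simp [cst]
    ring
  · have : j - i ≠ 0 := sub_ne_zero.mpr (Ne.symm hij)
    simp [this, hij, cst]

def RM : Matrix (ZMod n) (ZMod n) R4 := fun i j => if i + j = 0 then 1 else 0

variable {n}

lemma mulR (M : Matrix (ZMod n) (ZMod n) R4) (i j : ZMod n) :
    (M * RM n) i j = M i (-j) := by
  rw [Matrix.mul_apply]
  have : ∀ k : ZMod n, M i k * RM n k j = if k = -j then M i k else 0 := by
    intro k
    simp only [RM, mul_ite, mul_one, mul_zero]
    congr 1
    simp [eq_neg_iff_add_eq_zero]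
  simp only [this, Finset.sum_ite_eq' Finset.univ, Finset.mem_univ, if_true]

lemma Rmul (M : Matrix (ZMod n) (ZMod n) R4) (i j : ZMod n) :
    (RM n * M) i j = M (-i) j := by
  rw [Matrix.mul_apply]
  have : ∀ k : ZMod n, RM n i k * M k j = if k = -i then M k j else 0 := by
    intro k
    simp only [RM, ite_mul, one_mul, zero_mul]
    congr 1
    rw [eq_iff_iff, eq_neg_iff_add_eq_zero, add_comm]
  simp only [this, Finset.sum_ite_eq' Finset.univ, Finset.mem_univ, if_true]

omit [NeZero n] in
lemma RMT : (RM n)ᵀ = RM n := by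
  ext i j; simp [RM, Matrix.transpose_apply, add_comm]

lemma RM21 : RM n * RM n = 1 := by
  ext i j
  rw [Rmul]
  simp [RM, Matrix.one_apply, neg_add_eq_zero, eq_comm]

lemma Rcirc1 (x : ZMod n → R4) :
    RM n * circulant x = circulant (fun i => x (-i)) * RM n := by
  ext i j
  rw [Rmul, mulR]
  simp only [circulant_apply]
  congr 1
  ring

lemma RcircM (x : ZMod n → R4) (M : Matrix (ZMod n) (ZMod n) R4) :
    RM n * (circulant x * M) = circulant (fun i => x (-i)) * (RM n * M) := by
  rw [← Matrix.mul_assoc, Rcirc1, Matrix.mul_assoc]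

lemma ccomm (u w : ZMod n → R4) :
    circulant u * circulant w = circulant w * circulant u :=
  circulant_mul_comm u w

lemma ccomm' (u w : ZMod n → R4) (M : Matrix (ZMod n) (ZMod n) R4) :
    circulant u * (circulant w * M) = circulant w * (circulant u * M) := by
  rw [← Matrix.mul_assoc, ccomm, Matrix.mul_assoc]

variable (n)

def cA : Matrix (ZMod n) (ZMod n) R4 := circulant (va n a b c d)
def cB : Matrix (ZMod n) (ZMod n) R4 := circulant (vb n a b c d)
def cC : Matrix (ZMod n) (ZMod n) R4 := circulant (vc n a b c d)
def cD : Matrix (ZMod n) (ZMod n) R4 := circulant (vd n a b c d)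

def blocks : Fin 4 → Fin 4 → Matrix (ZMod n) (ZMod n) R4 :=
  ![![cA n a b c d, cB n a b c d * RM n, cC n a b c d * RM n, cD n a b c d * RM n],
    ![-(cB n a b c d * RM n), cA n a b c d, (cD n a b c d)ᵀ * RM n, -((cC n a b c d)ᵀ * RM n)],
    ![-(cC n a b c d * RM n), -((cD n a b c d)ᵀ * RM n), cA n a b c d, (cB n a b c d)ᵀ * RM n],
    ![-(cD n a b c d * RM n), (cC n a b c d)ᵀ * RM n, -((cB n a b c d)ᵀ * RM n), cA n a b c d]]

lemma hdiagN {a b c d : ℕ → ℤ} (h : IsTS n a b c d) :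
    circulant (va n a b c d) * circulant (fun i => va n a b c d (-i))
      + circulant (vb n a b c d) * circulant (fun i => vb n a b c d (-i))
      + circulant (vc n a b c d) * circulant (fun i => vc n a b c d (-i))
      + circulant (vd n a b c d) * circulant (fun i => vd n a b c d (-i))
    = cst n • (1 : Matrix (ZMod n) (ZMod n) R4) := by
  have h' := hdiag n h
  simpa only [transpose_circulant] using h'

set_option maxHeartbeats 1000000 in
lemma blocksum {a b c d : ℕ → ℤ} (h : IsTS n a b c d) (p q : Fin 4) :
    ∑ r : Fin 4, blocks n a b c d p r * (blocks n a b c d q r)ᵀ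
      = if p = q then cst n • (1 : Matrix (ZMod n) (ZMod n) R4) else 0 := by
  have habcd := hdiagN n h
  fin_cases p <;> fin_cases q <;>
    simp only [blocks, cA, cB, cC, cD, Fin.reduceFinMk, Fin.zero_eta, Fin.mk_one,
      Fin.sum_univ_four, Fin.isValue, Matrix.cons_val_zero,
      Matrix.cons_val_one, Matrix.head_cons, Matrix.cons_val_two, Matrix.tail_cons,
      Matrix.cons_val_three, if_true, if_false, reduceIte, Matrix.transpose_neg,
      Matrix.transpose_mul, Matrix.transpose_transpose, RMT, transpose_circulant,
      Matrix.neg_mul, Matrix.mul_neg, neg_neg, Matrix.mul_assoc, Rcirc1, RcircM,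
      RM21, Matrix.mul_one, Matrix.one_mul] <;>
    (try simp only [Fin.reduceEq, reduceIte]) <;>
    (try simp only [ccomm, ccomm'] at habcd ⊢) <;>
    first
      | ((rw [← habcd]) <;> abel)
      | abel

lemma negP {w : R4} (h : w = 0 ∨ ∃ k : Fin 4, w = X k ∨ w = -X k) :
    -w = 0 ∨ ∃ k : Fin 4, -w = X k ∨ -w = -X k := by
  rcases h with rfl | ⟨k, hk | hk⟩
  · left; simp
  · exact Or.inr ⟨k, Or.inr (by rw [hk])⟩
  · exact Or.inr ⟨k, Or.inl (by rw [hk, neg_neg])⟩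

lemma sign_mul {y : R4} {t : ℤ} (hy : ∃ k : Fin 4, y = X k ∨ y = -X k) (ht : t = 1 ∨ t = -1) :
    ∃ k : Fin 4, y * C t = X k ∨ y * C t = -X k := by
  obtain ⟨k, hk⟩ := hy
  rcases ht with rfl | rfl
  · refine ⟨k, ?_⟩; simpa using hk
  · have he : y * C (-1) = -y := by simp
    rw [he]
    rcases hk with hk | hk
    · exact ⟨k, Or.inr (by rw [hk])⟩
    · exact ⟨k, Or.inl (by rw [hk, neg_neg])⟩

lemma nz_pm {t : ℤ} (ht : t = 0 ∨ t = 1 ∨ t = -1) (hne : t ≠ 0) : t = 1 ∨ t = -1 := by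
  rcases ht with h | h | h
  · exact absurd h hne
  · exact Or.inl h
  · exact Or.inr h

lemma comb {y0 y1 y2 y3 : R4} {t0 t1 t2 t3 : ℤ}
    (h0 : ∃ k : Fin 4, y0 = X k ∨ y0 = -X k) (h1 : ∃ k : Fin 4, y1 = X k ∨ y1 = -X k)
    (h2 : ∃ k : Fin 4, y2 = X k ∨ y2 = -X k) (h3 : ∃ k : Fin 4, y3 = X k ∨ y3 = -X k)
    (ht0 : t0 = 0 ∨ t0 = 1 ∨ t0 = -1) (ht1 : t1 = 0 ∨ t1 = 1 ∨ t1 = -1)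
    (ht2 : t2 = 0 ∨ t2 = 1 ∨ t2 = -1) (ht3 : t3 = 0 ∨ t3 = 1 ∨ t3 = -1)
    (hone : (t0 ≠ 0 ∧ t1 = 0 ∧ t2 = 0 ∧ t3 = 0) ∨ (t0 = 0 ∧ t1 ≠ 0 ∧ t2 = 0 ∧ t3 = 0) ∨
      (t0 = 0 ∧ t1 = 0 ∧ t2 ≠ 0 ∧ t3 = 0) ∨ (t0 = 0 ∧ t1 = 0 ∧ t2 = 0 ∧ t3 ≠ 0)) :
    y0 * C t0 + y1 * C t1 + y2 * C t2 + y3 * C t3 = 0 ∨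
      ∃ k : Fin 4, y0 * C t0 + y1 * C t1 + y2 * C t2 + y3 * C t3 = X k ∨
        y0 * C t0 + y1 * C t1 + y2 * C t2 + y3 * C t3 = -X k := by
  rcases hone with ⟨hne, e1, e2, e3⟩ | ⟨e0, hne, e2, e3⟩ | ⟨e0, e1, hne, e3⟩ | ⟨e0, e1, e2, hne⟩
  · subst e1; subst e2; subst e3
    right; simpa using sign_mul h0 (nz_pm ht0 hne)
  · subst e0; subst e2; subst e3
    right; simpa using sign_mul h1 (nz_pm ht1 hne)
  · subst e0; subst e1; subst e3
    right; simpa using sign_mul h2 (nz_pm ht2 hne)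
  · subst e0; subst e1; subst e2
    right; simpa using sign_mul h3 (nz_pm ht3 hne)

lemma ventry {a b c d : ℕ → ℤ} (h : IsTS n a b c d) (z : ZMod n) :
    (va n a b c d z = 0 ∨ ∃ k : Fin 4, va n a b c d z = X k ∨ va n a b c d z = -X k) ∧
    (vb n a b c d z = 0 ∨ ∃ k : Fin 4, vb n a b c d z = X k ∨ vb n a b c d z = -X k) ∧
    (vc n a b c d z = 0 ∨ ∃ k : Fin 4, vc n a b c d z = X k ∨ vc n a b c d z = -X k) ∧
    (vd n a b c d z = 0 ∨ ∃ k : Fin 4, vd n a b c d z = X k ∨ vd n a b c d z = -X k) := by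
  obtain ⟨ha, hb, hc, hd, hone, -⟩ := h
  have h1 : 1 ≤ z.val + 1 := by omega
  have h2 : z.val + 1 ≤ n := by have := ZMod.val_lt z; omega
  have T0 := ha _ h1 h2
  have T1 := hb _ h1 h2
  have T2 := hc _ h1 h2
  have T3 := hd _ h1 h2
  have HO := hone _ h1 h2
  exact ⟨comb ⟨0, Or.inl rfl⟩ ⟨1, Or.inl rfl⟩ ⟨2, Or.inl rfl⟩ ⟨3, Or.inl rfl⟩ T0 T1 T2 T3 HO,
    comb ⟨1, Or.inr rfl⟩ ⟨0, Or.inl rfl⟩ ⟨3, Or.inl rfl⟩ ⟨2, Or.inr rfl⟩ T0 T1 T2 T3 HO,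
    comb ⟨2, Or.inr rfl⟩ ⟨3, Or.inr rfl⟩ ⟨0, Or.inl rfl⟩ ⟨1, Or.inl rfl⟩ T0 T1 T2 T3 HO,
    comb ⟨3, Or.inr rfl⟩ ⟨2, Or.inl rfl⟩ ⟨1, Or.inr rfl⟩ ⟨0, Or.inl rfl⟩ T0 T1 T2 T3 HO⟩

lemma circR_apply (x : ZMod n → R4) (i j : ZMod n) :
    (circulant x * RM n) i j = x (i + j) := by
  rw [mulR]
  simp [circulant_apply, sub_neg_eq_add]

set_option maxHeartbeats 2000000 in
lemma blocks_entry {a b c d : ℕ → ℤ} (h : IsTS n a b c d) (p q : Fin 4) (i j : ZMod n) :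
    blocks n a b c d p q i j = 0 ∨
      ∃ k : Fin 4, blocks n a b c d p q i j = X k ∨ blocks n a b c d p q i j = -X k := by
  have hva := fun z => (ventry n h z).1
  have hvb := fun z => (ventry n h z).2.1
  have hvc := fun z => (ventry n h z).2.2.1
  have hvd := fun z => (ventry n h z).2.2.2
  fin_cases p <;> fin_cases q <;>
    simp only [blocks, cA, cB, cC, cD, Fin.reduceFinMk, Fin.zero_eta, Fin.mk_one, Fin.isValue,
      Matrix.cons_val_zero, Matrix.cons_val_one, Matrix.head_cons, Matrix.cons_val_two,
      Matrix.tail_cons, Matrix.cons_val_three, Matrix.neg_apply, transpose_circulant,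
      circR_apply, circulant_apply, neg_neg] <;>
    [exact hva _; exact hvb _; exact hvc _; exact hvd _;
     exact negP (hvb _); exact hva _; exact hvd _; exact negP (hvc _);
     exact negP (hvc _); exact negP (hvd _); exact hva _; exact hvb _;
     exact negP (hvd _); exact hvc _; exact negP (hvb _); exact hva _]

def bigS (a b c d : ℕ → ℤ) : Matrix (Fin 4 × ZMod n) (Fin 4 × ZMod n) R4 :=
  fun pi qj => blocks n a b c d pi.1 qj.1 pi.2 qj.2

lemma bigS_mul {a b c d : ℕ → ℤ} (h : IsTS n a b c d) :
    bigS n a b c d * (bigS n a b c d)ᵀ = cst n • 1 := by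
  ext ⟨p, i⟩ ⟨q, j⟩
  rw [Matrix.mul_apply, Fintype.sum_prod_type]
  have step : ∀ r : Fin 4, ∑ k : ZMod n,
      bigS n a b c d (p,i) (r,k) * (bigS n a b c d)ᵀ (r,k) (q,j)
      = (blocks n a b c d p r * (blocks n a b c d q r)ᵀ) i j := by
    intro r
    rw [Matrix.mul_apply]
    refine Finset.sum_congr rfl fun k _ => ?_
    simp [bigS, Matrix.transpose_apply]
  rw [Finset.sum_congr rfl fun r _ => step r, ← Matrix.sum_apply i j,
    blocksum n h p q]
  by_cases hpq : p = q <;> by_cases hij : i = j <;>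
    simp [hpq, hij, Matrix.smul_apply, Matrix.one_apply, Prod.ext_iff]

lemma odmul {N : ℕ} (e : Fin N ≃ (Fin 4 × ZMod n)) {a b c d : ℕ → ℤ}
    (h : IsTS n a b c d) :
    ((bigS n a b c d).submatrix e e) * ((bigS n a b c d).submatrix e e)ᵀ
      = ((n : R4) * (X 0^2 + X 1^2 + X 2^2 + X 3^2)) • 1 := by
  rw [Matrix.transpose_submatrix, Matrix.submatrix_mul_equiv, bigS_mul n h]
  ext i j
  simp [Matrix.submatrix_apply, Matrix.smul_apply, Matrix.one_apply, cst,
    EmbeddingLike.apply_eq_iff_eq]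

end
end TSOD

/-- If T-sequences of length `n` exist, then there exists an orthogonal design
`OD(4n; n,n,n,n)`. -/
theorem TS_implies_OD (n : ℕ) (hTS : ∃ a b c d : ℕ → ℤ, IsTS n a b c d) :
    ∃ S : Matrix (Fin (4 * n)) (Fin (4 * n)) (MvPolynomial (Fin 4) ℤ), IsOD4 (4 * n) n S := by
  obtain ⟨a, b, c, d, h⟩ := hTS
  rcases Nat.eq_zero_or_pos n with hn | hn
  · subst hn
    refine ⟨0, fun i j => absurd i.isLt (by omega), ?_⟩
    ext i j
    exact absurd i.isLt (by omega)
  · haveI : NeZero n := ⟨hn.ne'⟩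
    have e : Fin (4*n) ≃ (Fin 4 × ZMod n) := Fintype.equivOfCardEq (by simp [ZMod.card])
    refine ⟨(TSOD.bigS n a b c d).submatrix e e, ?_, ?_⟩
    · intro i j
      exact TSOD.blocks_entry n h _ _ _ _
    · exact TSOD.odmul n e h
end

section
/- If there exists an orthogonal design OD(4t; t,t,t,t) and there exist Williamson-type matrices of order n, then there exists a Hadamard matrix of order 4tn. -/
/-- Williamson-type matrices of order `n`: four symmetric, pairwise commuting
`{±1}`-matrices `W₁, W₂, W₃, W₄` of order `n` with `W₁² + W₂² + W₃² + W₄² = 4n Iₙ`. -/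
def IsWilliamsonType (n : ℕ) (W : Fin 4 → Matrix (Fin n) (Fin n) ℤ) : Prop :=
  (∀ k, ∀ i j, W k i j = 1 ∨ W k i j = -1) ∧
  (∀ k, (W k).transpose = W k) ∧
  (∀ k l, W k * W l = W l * W k) ∧
  W 0 ^ 2 + W 1 ^ 2 + W 2 ^ 2 + W 3 ^ 2 = ((4 * n : ℤ)) • 1

/-- A Hadamard matrix of order `m`: an `m × m` matrix with entries in `{+1,-1}`
such that `H Hᵀ = m I_m`. -/
def IsHadamard (m : ℕ) (H : Matrix (Fin m) (Fin m) ℤ) : Prop :=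
  (∀ i j, H i j = 1 ∨ H i j = -1) ∧ H * H.transpose = (m : ℤ) • 1

/-- If there exists an orthogonal design `OD(4t; t,t,t,t)` and Williamson-type
matrices of order `n`, then there exists a Hadamard matrix of order `4tn`. -/
theorem OD_and_williamson_implies_hadamard (t n : ℕ)
    (hOD : ∃ S : Matrix (Fin (4 * t)) (Fin (4 * t)) (MvPolynomial (Fin 4) ℤ), IsOD4 (4 * t) t S)
    (hW : ∃ W : Fin 4 → Matrix (Fin n) (Fin n) ℤ, IsWilliamsonType n W) :
    ∃ H : Matrix (Fin (4 * t * n)) (Fin (4 * t * n)) ℤ, IsHadamard (4 * t * n) H := by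
  open MvPolynomial Matrix in
  obtain ⟨S, hS1, hS2⟩ := hOD
  obtain ⟨W, hW1, hW2, hW3, hW4⟩ := hW
  have hcomm : ∀ a ∈ Set.range W, ∀ b ∈ Set.range W, a * b = b * a := by
    rintro a ⟨k, rfl⟩ b ⟨l, rfl⟩; exact hW3 k l
  letI : CommRing (Algebra.adjoin ℤ (Set.range W)) := Algebra.adjoinCommRingOfComm ℤ hcomm
  set g : Fin 4 → Algebra.adjoin ℤ (Set.range W) := fun k => ⟨W k, Algebra.subset_adjoin ⟨k, rfl⟩⟩
    with hg
  set φ : MvPolynomial (Fin 4) ℤ →+* Matrix (Fin n) (Fin n) ℤ :=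
    ((Algebra.adjoin ℤ (Set.range W)).val.toRingHom).comp (aeval g).toRingHom with hφ
  have hφX : ∀ k, φ (X k) = W k := fun k => by simp [hφ, hg]
  -- φ of the scalar polynomial
  have hφc : φ ((t : MvPolynomial (Fin 4) ℤ) * (X 0 ^ 2 + X 1 ^ 2 + X 2 ^ 2 + X 3 ^ 2))
      = ((4 * t * n : ℕ) : ℤ) • (1 : Matrix (Fin n) (Fin n) ℤ) := by
    rw [_root_.map_mul, map_natCast]
    simp only [map_add, map_pow, hφX, hW4]
    have h1 : ((t : ℕ) : Matrix (Fin n) (Fin n) ℤ) = ((t : ℤ)) • 1 := by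
      rw [zsmul_one]; norm_cast
    rw [mul_smul_comm, mul_one, h1, smul_smul]
    congr 1
    push_cast
    ring
  -- transpose invariance
  have hφT : ∀ p : MvPolynomial (Fin 4) ℤ, (φ p)ᵀ = φ p := by
    intro p
    induction p using MvPolynomial.induction_on with
    | C a =>
        have : φ (C a) = ((a : ℤ) : Matrix (Fin n) (Fin n) ℤ) := by
          simp [hφ]
        rw [this]
        exact Matrix.transpose_intCast a
    | add p q hp hq => rw [map_add, transpose_add, hp, hq]
    | mul_X p k hp =>
        have hcom : φ p * W k = W k * φ p := by
          rw [← hφX k, ← _root_.map_mul, ← _root_.map_mul, mul_comm]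
        rw [_root_.map_mul, hφX, transpose_mul, hW2, hp, ← hcom]
  -- no zero entries
  have hnz : ∀ i j, ∃ k : Fin 4, S i j = X k ∨ S i j = -X k := by
    intro i j
    rcases hS1 i j with h0 | h; swap; · exact h
    exfalso
    set ev : MvPolynomial (Fin 4) ℤ →+* ℤ := (MvPolynomial.eval (fun _ => (1:ℤ))) with hev
    have key : ∑ m : Fin (4 * t), ev (S i m) ^ 2 = (4 * t : ℤ) := by
      have h := congrArg (fun M => ev (M i i)) hS2
      simp only [Matrix.mul_apply, Matrix.transpose_apply, Matrix.smul_apply,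
        Matrix.one_apply_eq, smul_eq_mul, mul_one] at h
      rw [map_sum] at h
      simp only [_root_.map_mul] at h
      calc ∑ m : Fin (4*t), ev (S i m) ^ 2 = ∑ m : Fin (4*t), ev (S i m) * ev (S i m) := by
            simp [sq]
        _ = (4 * t : ℤ) := by rw [h]; simp [hev]; push_cast; ring
    have hle : ∀ m : Fin (4 * t), ev (S i m) ^ 2 ≤ 1 := by
      intro m
      rcases hS1 i m with h | ⟨k, h | h⟩ <;> simp [h, hev]
    have hlt : ev (S i j) ^ 2 < 1 := by simp [h0]
    have hc : ∑ m : Fin (4 * t), ev (S i m) ^ 2 < ∑ _m : Fin (4 * t), (1 : ℤ) :=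
      Finset.sum_lt_sum (fun m _ => hle m) ⟨j, Finset.mem_univ j, hlt⟩
    simp only [Finset.sum_const, Finset.card_univ, Fintype.card_fin, nsmul_eq_mul, mul_one] at hc
    rw [key] at hc
    push_cast at hc
    exact lt_irrefl _ hc
  -- block matrix
  set H₀ : Matrix (Fin (4 * t) × Fin n) (Fin (4 * t) × Fin n) ℤ :=
    fun p q => φ (S p.1 q.1) p.2 q.2 with hH₀
  have hmul : H₀ * H₀ᵀ = ((4 * t * n : ℕ) : ℤ) • 1 := by
    ext ⟨i, a⟩ ⟨j, b⟩
    rw [Matrix.mul_apply, Fintype.sum_prod_type]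
    have step : ∀ m : Fin (4 * t),
        ∑ c : Fin n, H₀ (i, a) (m, c) * H₀ᵀ (m, c) (j, b) = φ (S i m * S j m) a b := by
      intro m
      have h1 : φ (S i m * S j m) = φ (S i m) * (φ (S j m))ᵀ := by
        rw [_root_.map_mul, hφT]
      rw [h1, Matrix.mul_apply]
      exact Finset.sum_congr rfl fun c _ => by simp only [Matrix.transpose_apply]; simp [hH₀]
    simp only [step]
    have hsum : ∑ m : Fin (4 * t), φ (S i m * S j m) = φ ((S * Sᵀ) i j) := by
      rw [Matrix.mul_apply, map_sum]
      rfl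
    calc ∑ m : Fin (4 * t), φ (S i m * S j m) a b
        = (∑ m : Fin (4 * t), φ (S i m * S j m)) a b := by
          rw [Matrix.sum_apply]
      _ = φ ((S * Sᵀ) i j) a b := by rw [hsum]
      _ = (((4 * t * n : ℕ) : ℤ) • (1 : Matrix (Fin (4*t) × Fin n) (Fin (4*t) × Fin n) ℤ))
            (i, a) (j, b) := by
          rw [hS2]
          rcases eq_or_ne i j with hij | hij
          · subst hij
            rw [Matrix.smul_apply, Matrix.one_apply_eq, smul_eq_mul, mul_one, hφc]
            simp [Matrix.smul_apply, Matrix.one_apply, Prod.ext_iff]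
          · rw [Matrix.smul_apply, Matrix.one_apply_ne hij, smul_zero, map_zero,
              Matrix.zero_apply]
            simp [Matrix.smul_apply, Matrix.one_apply, Prod.ext_iff, hij]
  refine ⟨Matrix.reindex finProdFinEquiv finProdFinEquiv H₀, ?_, ?_⟩
  · intro i j
    rw [Matrix.reindex_apply, Matrix.submatrix_apply]
    simp only [hH₀]
    obtain ⟨k, h | h⟩ := hnz (finProdFinEquiv.symm i).1 (finProdFinEquiv.symm j).1
    · rw [h, hφX]; exact hW1 k _ _
    · rw [h, map_neg, hφX, Matrix.neg_apply]
      rcases hW1 k (finProdFinEquiv.symm i).2 (finProdFinEquiv.symm j).2 with h' | h' <;>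
        rw [h'] <;> norm_num
  · rw [Matrix.reindex_apply, Matrix.transpose_submatrix, Matrix.submatrix_mul_equiv, hmul]
    ext i j
    rw [Matrix.submatrix_apply, Matrix.smul_apply, Matrix.smul_apply, Matrix.one_apply,
      Matrix.one_apply]
    simp only [EmbeddingLike.apply_eq_iff_eq]
end
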